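/- Let μ be a Borel probability measure on Ω satisfying GCB(C) and let A₀ ⊂ Ω be a Borel set with μ(A₀) > 0. Then for every n ∈ ℕ: ∫ 𝓢_{A₀}(y,n) dμ(y) ≤ 2√(C ln(1/μ(A₀)) / n), where 𝓢_{A₀}(x,n) = (1/n) inf_{y ∈ A₀} Σ_{j=0}^{n−1} d_θ(T^j x, T^j y). -/

import Mathlib

open MeasureTheory Filter Topology
open scoped ENNReal NNReal BigOperators

noncomputable section

/-- The shift map on `Ω = Aℕ`. -/
def shift {A : Type*} (x : ℕ → A) : ℕ → A := fun k => x (k + 1)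

/-- Prepend a symbol `a` to `x`. -/
def cons {A : Type*} (a : A) (x : ℕ → A) : ℕ → A := fun k =>
  match k with
  | 0 => a
  | k + 1 => x k

/-- Prepend a word `a ∈ Aⁿ` to `x`. -/
def wcat {A : Type*} {n : ℕ} (a : Fin n → A) (x : ℕ → A) : ℕ → A := fun k =>
  if h : k < n then a ⟨k, h⟩ else x (k - n)

/-- The metric `d_θ(x,y) = θ^(first disagreement)`. -/
def dtheta {A : Type*} (θ : ℝ) (x y : ℕ → A) : ℝ :=
  letI := Classical.dec (x = y)
  if x = y then 0 else θ ^ sInf {k | x k ≠ y k}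

/-- `K : Ωⁿ → ℝ` is separately `d_θ`-Lipschitz with constants `ℓ i`. -/
def SepLip {A : Type*} (θ : ℝ) {n : ℕ} (K : (Fin n → (ℕ → A)) → ℝ) (ℓ : Fin n → ℝ) : Prop :=
  ∀ (x : Fin n → (ℕ → A)) (i : Fin n) (x' : ℕ → A),
    |K x - K (Function.update x i x')| ≤ ℓ i * dtheta θ (x i) x'

/-- Gaussian concentration bound with constant `C`. -/
def GCB {A : Type*} [MeasurableSpace A] (θ C : ℝ) (μ : Measure (ℕ → A)) : Prop :=
  ∀ (n : ℕ), 1 ≤ n → ∀ (K : (Fin n → (ℕ → A)) → ℝ) (ℓ : Fin n → ℝ), SepLip θ K ℓ →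
    ∫ x, Real.exp (K (fun i => shift^[(i : ℕ)] x)) ∂μ ≤
      Real.exp (∫ y, K (fun i => shift^[(i : ℕ)] y) ∂μ) * Real.exp (C * ∑ j, ℓ j ^ 2)

/-- Birkhoff sum `S_n f`. -/
def birk {A : Type*} (f : (ℕ → A) → ℝ) (n : ℕ) (x : ℕ → A) : ℝ :=
  ∑ i ∈ Finset.range n, f (shift^[i] x)

/-- Variation `var_n(φ)` (as an extended real). -/
def evar {A : Type*} (φ : (ℕ → A) → ℝ) (n : ℕ) : ℝ≥0∞ :=
  ⨆ (x : ℕ → A) (y : ℕ → A) (_ : ∀ i < n, x i = y i), ENNReal.ofReal |φ x - φ y|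

/-- `W(φ,x,y)` (as an extended real). -/
def Wpair {A : Type*} (φ : (ℕ → A) → ℝ) (x y : ℕ → A) : ℝ≥0∞ :=
  ⨆ (n : ℕ) (a : Fin n → A), ENNReal.ofReal |birk φ n (wcat a x) - birk φ n (wcat a y)|

/-- `W_p(φ)` (as an extended real). -/
def Wp {A : Type*} (φ : (ℕ → A) → ℝ) (p : ℕ) : ℝ≥0∞ :=
  ⨆ (x : ℕ → A) (y : ℕ → A) (_ : ∀ i < p, x i = y i), Wpair φ x y

/-- Walters' condition. -/
def Walters {A : Type*} (φ : (ℕ → A) → ℝ) : Prop :=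
  (⨆ (x : ℕ → A) (y : ℕ → A), Wpair φ x y) ≠ ⊤ ∧ (∀ p, 0 < Wp φ p) ∧
    Antitone (Wp φ) ∧ Tendsto (Wp φ) atTop (𝓝 0)

/-- Ruelle's transfer operator `P_φ`. -/
def transfer {A : Type*} [Fintype A] (φ f : (ℕ → A) → ℝ) (x : ℕ → A) : ℝ :=
  ∑ a : A, Real.exp (φ (cons a x)) * f (cons a x)

/-- Shadowing quantity `𝓢_{A₀}(x,n)`. -/
def shad {A : Type*} (θ : ℝ) (A₀ : Set (ℕ → A)) (n : ℕ) (x : ℕ → A) : ℝ :=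
  (1 / (n : ℝ)) * ⨅ y : A₀, ∑ j ∈ Finset.range n, dtheta θ (shift^[j] x) (shift^[j] (y : ℕ → A))


section auxlem
variable {A : Type*}

lemma dtheta_self (θ : ℝ) (x : ℕ → A) : dtheta θ x x = 0 := by
  simp [dtheta]

lemma dtheta_nonneg {θ : ℝ} (hθ : 0 ≤ θ) (x y : ℕ → A) : 0 ≤ dtheta θ x y := by
  classical
  unfold dtheta
  split_ifs
  · exact le_refl 0
  · exact pow_nonneg hθ _

lemma dtheta_triangle {θ : ℝ} (hθ0 : 0 ≤ θ) (hθ1 : θ ≤ 1) (x y z : ℕ → A) :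
    dtheta θ x z ≤ dtheta θ x y + dtheta θ y z := by
  classical
  by_cases hxz : x = z
  · have : dtheta θ x z = 0 := by simp [dtheta, hxz]
    rw [this]
    exact add_nonneg (dtheta_nonneg hθ0 _ _) (dtheta_nonneg hθ0 _ _)
  by_cases hxy : x = y
  · subst hxy
    simpa [dtheta_self] using le_refl (dtheta θ x z)
  by_cases hyz : y = z
  · subst hyz
    simpa [dtheta_self] using le_refl (dtheta θ x y)
  have dxz : dtheta θ x z = θ ^ sInf {k | x k ≠ z k} := by simp [dtheta, hxz]
  have dxy : dtheta θ x y = θ ^ sInf {k | x k ≠ y k} := by simp [dtheta, hxy]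
  have dyz : dtheta θ y z = θ ^ sInf {k | y k ≠ z k} := by simp [dtheta, hyz]
  have key : sInf {k | x k ≠ y k} ≤ sInf {k | x k ≠ z k} ∨
      sInf {k | y k ≠ z k} ≤ sInf {k | x k ≠ z k} := by
    by_contra h
    push_neg at h
    obtain ⟨h1, h2⟩ := h
    have hne : {k | x k ≠ z k}.Nonempty := Function.ne_iff.mp hxz
    have hk : x (sInf {k | x k ≠ z k}) ≠ z (sInf {k | x k ≠ z k}) := Nat.sInf_mem hne
    have e1 : x (sInf {k | x k ≠ z k}) = y (sInf {k | x k ≠ z k}) := by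
      by_contra he
      exact absurd (Nat.sInf_le he) (not_le.2 h1)
    have e2 : y (sInf {k | x k ≠ z k}) = z (sInf {k | x k ≠ z k}) := by
      by_contra he
      exact absurd (Nat.sInf_le he) (not_le.2 h2)
    exact hk (e1.trans e2)
  rw [dxz, dxy, dyz]
  rcases key with h | h
  · have := pow_le_pow_of_le_one hθ0 hθ1 h
    have h2 : (0:ℝ) ≤ θ ^ sInf {k | y k ≠ z k} := pow_nonneg hθ0 _
    linarith
  · have := pow_le_pow_of_le_one hθ0 hθ1 h
    have h2 : (0:ℝ) ≤ θ ^ sInf {k | x k ≠ y k} := pow_nonneg hθ0 _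
    linarith

lemma dtheta_symm (θ : ℝ) (x y : ℕ → A) : dtheta θ x y = dtheta θ y x := by
  classical
  unfold dtheta
  by_cases h : x = y
  · simp [h]
  · have h' : y ≠ x := fun hh => h hh.symm
    simp only [if_neg h, if_neg h']
    have : {k | x k ≠ y k} = {k | y k ≠ x k} := by
      ext k; exact ⟨fun hk => Ne.symm hk, fun hk => (Ne.symm hk)⟩
    rw [this]

lemma abs_dtheta_sub_le {θ : ℝ} (hθ0 : 0 ≤ θ) (hθ1 : θ ≤ 1) (x x' z : ℕ → A) :
    |dtheta θ x z - dtheta θ x' z| ≤ dtheta θ x x' := by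
  rw [abs_sub_le_iff]
  constructor
  · have h1 := dtheta_triangle hθ0 hθ1 x x' z
    linarith
  · have h1 := dtheta_triangle hθ0 hθ1 x' x z
    rw [dtheta_symm θ x' x] at h1
    linarith

lemma abs_ciInf_sub_ciInf {ι : Sort*} [Nonempty ι] {f g : ι → ℝ} {ε : ℝ}
    (hf : BddBelow (Set.range f)) (hg : BddBelow (Set.range g))
    (h : ∀ i, |f i - g i| ≤ ε) : |(⨅ i, f i) - ⨅ i, g i| ≤ ε := by
  have h1 : (⨅ i, f i) - ε ≤ ⨅ i, g i := by
    refine le_ciInf fun i => ?_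
    have hfi := ciInf_le hf i
    have := (abs_sub_le_iff.mp (h i)).1
    linarith
  have h2 : (⨅ i, g i) - ε ≤ ⨅ i, f i := by
    refine le_ciInf fun i => ?_
    have hgi := ciInf_le hg i
    have := (abs_sub_le_iff.mp (h i)).2
    linarith
  rw [abs_sub_le_iff]
  constructor <;> linarith

end auxlem

section mainproof
variable {A : Type*}

def Sfun (θ : ℝ) (A₀ : Set (ℕ → A)) (n : ℕ) (x : ℕ → A) : ℝ :=
  ⨅ y : A₀, ∑ j ∈ Finset.range n, dtheta θ (shift^[j] x) (shift^[j] (y : ℕ → A))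

def Kfun (θ lam : ℝ) (A₀ : Set (ℕ → A)) (n : ℕ) (a : Fin n → (ℕ → A)) : ℝ :=
  -lam * ⨅ y : A₀, ∑ j : Fin n, dtheta θ (a j) (shift^[(j : ℕ)] (y : ℕ → A))

lemma shad_eq_Sfun (θ : ℝ) (A₀ : Set (ℕ → A)) (n : ℕ) (x : ℕ → A) :
    shad θ A₀ n x = (1 / (n : ℝ)) * Sfun θ A₀ n x := rfl

theorem key_ineq [MeasurableSpace A]
    (θ : ℝ) (hθ0 : 0 < θ) (hθ1 : θ < 1) (C : ℝ) (hC : 0 < C)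
    (μ : Measure (ℕ → A)) [IsProbabilityMeasure μ] (hGCB : GCB θ C μ)
    (A₀ : Set (ℕ → A)) (hA₀m : MeasurableSet A₀) (hA₀ : 0 < μ A₀)
    (n : ℕ) (hn : 1 ≤ n) (hint : Integrable (shad θ A₀ n) μ)
    (lam : ℝ) (hlam : 0 ≤ lam) :
    Real.log (μ A₀).toReal ≤
      -lam * ((n : ℝ) * ∫ y, shad θ A₀ n y ∂μ) + C * ((n : ℝ) * lam ^ 2) := by
  classical
  have hA₀ne : A₀.Nonempty := nonempty_of_measure_ne_zero hA₀.ne'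
  haveI : Nonempty ↥A₀ := hA₀ne.to_subtype
  have hn' : (0 : ℝ) < n := by exact_mod_cast hn
  have hbdd : ∀ x : ℕ → A, BddBelow (Set.range fun y : A₀ =>
      ∑ j ∈ Finset.range n, dtheta θ (shift^[j] x) (shift^[j] (y : ℕ → A))) := by
    intro x
    refine ⟨0, ?_⟩
    rintro r ⟨y, rfl⟩
    exact Finset.sum_nonneg fun j _ => dtheta_nonneg hθ0.le _ _
  have hS0 : ∀ x, 0 ≤ Sfun θ A₀ n x := fun x =>
    Real.iInf_nonneg fun y => Finset.sum_nonneg fun j _ => dtheta_nonneg hθ0.le _ _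
  have hSA₀ : ∀ x ∈ A₀, Sfun θ A₀ n x = 0 := by
    intro x hx
    refine le_antisymm ?_ (hS0 x)
    have h := ciInf_le (hbdd x) (⟨x, hx⟩ : A₀)
    have h2 : (∑ j ∈ Finset.range n, dtheta θ (shift^[j] x) (shift^[j] x)) = 0 := by
      simp [dtheta_self]
    rw [Sfun]
    rw [h2] at h
    exact h
  have hSshad : ∀ x, Sfun θ A₀ n x = (n : ℝ) * shad θ A₀ n x := by
    intro x
    rw [shad_eq_Sfun]
    field_simp
  have hbdd' : ∀ a : Fin n → (ℕ → A), BddBelow (Set.range fun y : A₀ =>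
      ∑ j : Fin n, dtheta θ (a j) (shift^[(j : ℕ)] (y : ℕ → A))) := by
    intro a
    refine ⟨0, ?_⟩
    rintro r ⟨y, rfl⟩
    exact Finset.sum_nonneg fun j _ => dtheta_nonneg hθ0.le _ _
  have hsep : SepLip θ (Kfun θ lam A₀ n) (fun _ => lam) := by
    intro a i x'
    have hpt : ∀ y : A₀,
        |(∑ j : Fin n, dtheta θ (a j) (shift^[(j : ℕ)] (y : ℕ → A))) -
          ∑ j : Fin n, dtheta θ (Function.update a i x' j) (shift^[(j : ℕ)] (y : ℕ → A))| ≤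
          dtheta θ (a i) x' := by
      intro y
      have heq : (∑ j : Fin n, dtheta θ (a j) (shift^[(j : ℕ)] (y : ℕ → A))) -
          (∑ j : Fin n, dtheta θ (Function.update a i x' j) (shift^[(j : ℕ)] (y : ℕ → A))) =
          dtheta θ (a i) (shift^[(i : ℕ)] (y : ℕ → A)) -
            dtheta θ x' (shift^[(i : ℕ)] (y : ℕ → A)) := by
        rw [← Finset.sum_sub_distrib]
        rw [Finset.sum_eq_single i]
        · simp [Function.update_self]
        · intro j _ hj
          simp [Function.update_of_ne hj]
        · intro h
          exact absurd (Finset.mem_univ i) h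
      rw [heq]
      exact abs_dtheta_sub_le hθ0.le hθ1.le _ _ _
    have habs := abs_ciInf_sub_ciInf (hbdd' a) (hbdd' (Function.update a i x')) hpt
    have heq2 : |Kfun θ lam A₀ n a - Kfun θ lam A₀ n (Function.update a i x')| =
        lam * |(⨅ y : A₀, ∑ j : Fin n, dtheta θ (a j) (shift^[(j : ℕ)] (y : ℕ → A))) -
          ⨅ y : A₀, ∑ j : Fin n, dtheta θ (Function.update a i x' j)
            (shift^[(j : ℕ)] (y : ℕ → A))| := by
      rw [Kfun, Kfun, ← mul_sub, abs_mul, abs_neg, abs_of_nonneg hlam]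
    rw [heq2]
    exact mul_le_mul_of_nonneg_left habs hlam
  have hKx : ∀ x : ℕ → A,
      Kfun θ lam A₀ n (fun i => shift^[(i : ℕ)] x) = -lam * ((n : ℝ) * shad θ A₀ n x) := by
    intro x
    rw [← hSshad x, Kfun, Sfun]
    congr 1
    refine iInf_congr fun y => ?_
    exact Fin.sum_univ_eq_sum_range (fun j => dtheta θ (shift^[j] x) (shift^[j] (y : ℕ → A))) n
  have hgcb := hGCB n hn (Kfun θ lam A₀ n) (fun _ => lam) hsep
  simp only [hKx] at hgcb
  have hmid : (∫ y, -lam * ((n : ℝ) * shad θ A₀ n y) ∂μ) =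
      -lam * ((n : ℝ) * ∫ y, shad θ A₀ n y ∂μ) := by
    rw [integral_const_mul, integral_const_mul]
  have hsum : (∑ _j : Fin n, lam ^ 2) = (n : ℝ) * lam ^ 2 := by
    simp [Finset.sum_const, Finset.card_univ]
  rw [hmid, hsum] at hgcb
  have hmeas : AEStronglyMeasurable (fun x => Real.exp (-lam * ((n : ℝ) * shad θ A₀ n x))) μ :=
    Real.continuous_exp.comp_aestronglyMeasurable
      ((hint.aestronglyMeasurable.const_mul ((n : ℝ))).const_mul (-lam))
  have hshad0 : ∀ x, 0 ≤ shad θ A₀ n x := by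
    intro x
    rw [shad_eq_Sfun]
    exact mul_nonneg (by positivity) (hS0 x)
  have hexp_le_one : ∀ x, Real.exp (-lam * ((n : ℝ) * shad θ A₀ n x)) ≤ 1 := by
    intro x
    rw [Real.exp_le_one_iff]
    have h0 : 0 ≤ lam * ((n : ℝ) * shad θ A₀ n x) :=
      mul_nonneg hlam (mul_nonneg hn'.le (hshad0 x))
    linarith
  have hexp_int : Integrable (fun x => Real.exp (-lam * ((n : ℝ) * shad θ A₀ n x))) μ := by
    refine Integrable.mono' (integrable_const 1) hmeas (Filter.Eventually.of_forall fun x => ?_)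
    rw [Real.norm_eq_abs, abs_of_pos (Real.exp_pos _)]
    exact hexp_le_one x
  have hlow : (μ A₀).toReal ≤ ∫ x, Real.exp (-lam * ((n : ℝ) * shad θ A₀ n x)) ∂μ := by
    have h1 : ∫ x in A₀, Real.exp (-lam * ((n : ℝ) * shad θ A₀ n x)) ∂μ =
        ∫ _x in A₀, (1 : ℝ) ∂μ := by
      refine setIntegral_congr_fun hA₀m fun x hx => ?_
      have hz : shad θ A₀ n x = 0 := by rw [shad_eq_Sfun, hSA₀ x hx, mul_zero]
      rw [hz]
      simp
    have h2 : ∫ _x in A₀, (1 : ℝ) ∂μ = (μ A₀).toReal := by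
      simp [setIntegral_const]
      rfl
    calc (μ A₀).toReal = ∫ x in A₀, Real.exp (-lam * ((n : ℝ) * shad θ A₀ n x)) ∂μ := by
          rw [h1, h2]
      _ ≤ ∫ x, Real.exp (-lam * ((n : ℝ) * shad θ A₀ n x)) ∂μ :=
          setIntegral_le_integral hexp_int
            (Filter.Eventually.of_forall fun x => (Real.exp_pos _).le)
  have hm0 : 0 < (μ A₀).toReal := ENNReal.toReal_pos hA₀.ne' (measure_ne_top μ A₀)
  have hfinal : (μ A₀).toReal ≤
      Real.exp (-lam * ((n : ℝ) * ∫ y, shad θ A₀ n y ∂μ) + C * ((n : ℝ) * lam ^ 2)) := by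
    rw [Real.exp_add]
    exact hlow.trans hgcb
  calc Real.log (μ A₀).toReal ≤ Real.log (Real.exp
        (-lam * ((n : ℝ) * ∫ y, shad θ A₀ n y ∂μ) + C * ((n : ℝ) * lam ^ 2))) :=
        Real.log_le_log hm0 hfinal
    _ = _ := Real.log_exp _

end mainproof

/-- expectation bound for the shadowing quantity. -/
theorem stmt14 {A : Type*} [MeasurableSpace A]
    (θ : ℝ) (hθ0 : 0 < θ) (hθ1 : θ < 1) (C : ℝ) (hC : 0 < C)
    (μ : Measure (ℕ → A)) [IsProbabilityMeasure μ] (hGCB : GCB θ C μ)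
    (A₀ : Set (ℕ → A)) (hA₀m : MeasurableSet A₀) (hA₀ : 0 < μ A₀)
    (n : ℕ) (hn : 1 ≤ n) :
    ∫ y, shad θ A₀ n y ∂μ ≤
      2 * Real.sqrt (C * Real.log (1 / (μ A₀).toReal) / n) := by
  classical
  by_cases hint : Integrable (shad θ A₀ n) μ
  swap
  · rw [integral_undef hint]
    positivity
  have hm0 : 0 < (μ A₀).toReal := ENNReal.toReal_pos hA₀.ne' (measure_ne_top μ A₀)
  have hm1 : (μ A₀).toReal ≤ 1 := by
    have h := prob_le_one (μ := μ) (s := A₀)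
    calc (μ A₀).toReal ≤ (1 : ℝ≥0∞).toReal := ENNReal.toReal_mono ENNReal.one_ne_top h
      _ = 1 := by simp
  have hn' : (0 : ℝ) < n := by exact_mod_cast hn
  set I := ∫ y, shad θ A₀ n y ∂μ with hI
  set t := Real.log (1 / (μ A₀).toReal) with ht
  have htlog : Real.log (μ A₀).toReal = -t := by
    rw [ht, one_div, Real.log_inv, neg_neg]
  have ht0 : 0 ≤ t := by
    rw [ht, one_div, Real.log_inv]
    have := Real.log_nonpos hm0.le hm1
    linarith
  have key : ∀ lam : ℝ, 0 ≤ lam → -t ≤ -lam * ((n : ℝ) * I) + C * ((n : ℝ) * lam ^ 2) := by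
    intro lam hlam
    rw [← htlog]
    exact key_ineq θ hθ0 hθ1 C hC μ hGCB A₀ hA₀m hA₀ n hn hint lam hlam
  rcases eq_or_lt_of_le ht0 with ht0' | ht0'
  · -- t = 0; show I ≤ 0
    have hrhs : 2 * Real.sqrt (C * t / n) = 0 := by
      rw [← ht0']
      simp
    rw [hrhs]
    by_contra hI0
    push_neg at hI0
    have hlam : (0 : ℝ) < I / (2 * C) := by positivity
    have hk := key (I / (2 * C)) hlam.le
    rw [← ht0'] at hk
    have hCn : (0 : ℝ) < C * n := by positivity
    have hpos : 0 < (n : ℝ) * (I * I) := mul_pos hn' (mul_pos hI0 hI0)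
    have hexp : C * ((n:ℝ) * (I / (2 * C)) ^ 2) = (n:ℝ) * (I * I) / (4 * C) := by
      field_simp
      ring
    rw [hexp] at hk
    have h2C : -(I / (2 * C)) * ((n:ℝ) * I) = -((n:ℝ) * (I * I)) / (2 * C) := by
      field_simp
    rw [h2C] at hk
    have h4C : (0:ℝ) < 4 * C := by positivity
    have h2C' : (0:ℝ) < 2 * C := by positivity
    rw [div_add_div _ _ (ne_of_gt h2C') (ne_of_gt h4C)] at hk
    have := (div_nonneg_iff.mp (by linarith [hk] : (0:ℝ) ≤ (-((n:ℝ)*(I*I)) * (4*C) + (2*C) * ((n:ℝ)*(I*I)))/((2*C)*(4*C))))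
    rcases this with ⟨ha, _⟩ | ⟨_, hb⟩
    · nlinarith
    · nlinarith
  · -- t > 0
    set s := Real.sqrt (C * t / n) with hs
    have hs2 : s ^ 2 = C * t / n := Real.sq_sqrt (by positivity)
    have hs0 : 0 < s := Real.sqrt_pos.2 (by positivity)
    have hk := key (s / C) (by positivity)
    -- C * (n * (s/C)^2) = t
    have hCt : C * ((n : ℝ) * (s / C) ^ 2) = t := by
      rw [div_pow, hs2]
      field_simp
    rw [hCt] at hk
    -- hk : -t ≤ -(s/C) * (n * I) + t
    have h1 : (s / C) * ((n : ℝ) * I) ≤ 2 * t := by linarith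
    have ht' : t = s ^ 2 * n / C := by
      rw [hs2]
      field_simp
    rw [ht'] at h1
    -- (s/C) * (n*I) ≤ 2 * s^2 * n / C
    have h2 : s * ((n : ℝ) * I) ≤ 2 * s ^ 2 * (n : ℝ) := by
      have := mul_le_mul_of_nonneg_left h1 hC.le
      calc s * ((n : ℝ) * I) = C * (s / C * ((n : ℝ) * I)) := by field_simp
        _ ≤ C * (2 * (s ^ 2 * n / C)) := this
        _ = 2 * s ^ 2 * (n : ℝ) := by field_simp
    nlinarith [mul_pos hs0 hn']
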